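/- arXiv:2505.03904 — 2 statements merged into one kernel-verified Lean document; each statement's English description precedes it below -/
import Mathlib

section
/- Let V be a finite-dimensional complex Hermitian space with orthogonal decomposition V = V₁ ⊕ ⋯ ⊕ V_m, and let H° = H₁° × ⋯ × H_m° ⊂ U(V) where each Hᵢ° acts irreducibly and non-trivially on Vᵢ and trivially on V_j for j ≠ i. Then the quotient group N_{U(V)}(H°) / (N_{U(V₁)}(H₁°) × ⋯ × N_{U(V_m)}(H_m°)) is finite of order at most m!. -/
/-- The block-diagonal embedding of a product of unitary groups into the unitary group of
the orthogonal direct sum `PiLp 2 V`. -/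
noncomputable def blockDiagEmbed {m : ℕ} (V : Fin m → Type*)
    [∀ i, NormedAddCommGroup (V i)] [∀ i, InnerProductSpace ℂ (V i)] :
    (∀ i, (V i ≃ₗᵢ[ℂ] V i)) →* (PiLp 2 V ≃ₗᵢ[ℂ] PiLp 2 V) where
  toFun u := LinearIsometryEquiv.piLpCongrRight 2 u
  map_one' := by ext x; rfl
  map_mul' a b := by ext x; rfl

namespace NormalizerAux
set_option linter.unusedSectionVars false
set_option linter.unusedVariables false

variable {m : ℕ} {V : Fin m → Type*}
  [∀ i, NormedAddCommGroup (V i)] [∀ i, InnerProductSpace ℂ (V i)]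

/-- The `i`-th block of `PiLp 2 V`. -/
noncomputable def block (i : Fin m) : Submodule ℂ (PiLp 2 V) where
  carrier := {x | ∀ j, j ≠ i → x j = 0}
  add_mem' {x y} hx hy j hj := by
    show (x + y) j = 0
    rw [PiLp.add_apply, hx j hj, hy j hj, add_zero]
  zero_mem' j hj := rfl
  smul_mem' c x hx j hj := by
    show (c • x) j = 0
    rw [PiLp.smul_apply, hx j hj, smul_zero]

lemma mem_block {i : Fin m} {x : PiLp 2 V} : x ∈ (block i : Submodule ℂ (PiLp 2 V)) ↔
    ∀ j, j ≠ i → x j = 0 := Iff.rfl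

/-- The element of `PiLp 2 V` supported at `i`. -/
noncomputable def sing (i : Fin m) (v : V i) : PiLp 2 V := (WithLp.equiv 2 (∀ j, V j)).symm (Pi.single i v)

lemma sing_apply_same (i : Fin m) (v : V i) : sing i v i = v := Pi.single_eq_same i v

lemma sing_mem_block (i : Fin m) (v : V i) : sing i v ∈ (block i : Submodule ℂ (PiLp 2 V)) :=
  fun j hj => Pi.single_eq_of_ne hj v

lemma block_ext {i : Fin m} {x y : PiLp 2 V} (hx : x ∈ (block i : Submodule ℂ (PiLp 2 V)))
    (hy : y ∈ (block i : Submodule ℂ (PiLp 2 V))) (h : x i = y i) : x = y := by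
  refine PiLp.ext fun j => ?_
  by_cases hj : j = i
  · subst hj; exact h
  · rw [hx j hj, hy j hj]

lemma eq_sing_of_mem_block {i : Fin m} {x : PiLp 2 V}
    (hx : x ∈ (block i : Submodule ℂ (PiLp 2 V))) : x = sing i (x i) :=
  block_ext hx (sing_mem_block i (x i)) (sing_apply_same i (x i)).symm

lemma norm_of_mem_block {i : Fin m} {x : PiLp 2 V}
    (hx : x ∈ (block i : Submodule ℂ (PiLp 2 V))) : ‖x‖ = ‖x i‖ := by
  rw [PiLp.norm_eq_of_L2]
  rw [Finset.sum_eq_single i (fun j _ hj => by rw [hx j hj, norm_zero]; ring)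
    (fun h => absurd (Finset.mem_univ i) h)]
  exact Real.sqrt_sq (norm_nonneg _)

lemma norm_sing (i : Fin m) (v : V i) : ‖sing i v‖ = ‖v‖ := by
  rw [norm_of_mem_block (sing_mem_block i v), sing_apply_same]

lemma block_injective (hnt : ∀ i, ∃ v : V i, v ≠ 0) {i j : Fin m}
    (h : (block i : Submodule ℂ (PiLp 2 V)) = block j) : i = j := by
  by_contra hij
  obtain ⟨v, hv⟩ := hnt i
  have := (h ▸ sing_mem_block i v) i hij
  rw [sing_apply_same] at this
  exact hv this

/-- projection onto the `i`-th coordinate as a linear map -/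
noncomputable def projL (i : Fin m) : PiLp 2 V →ₗ[ℂ] V i :=
  (LinearMap.proj i).comp (WithLp.linearEquiv 2 ℂ (∀ j, V j)).toLinearMap

lemma projL_apply (i : Fin m) (x : PiLp 2 V) : projL i x = x i := rfl

variable (H : ∀ i, Subgroup (V i ≃ₗᵢ[ℂ] V i))

/-- invariance under the product group -/
def HInv (U : Submodule ℂ (PiLp 2 V)) : Prop :=
  ∀ h : ∀ i, V i ≃ₗᵢ[ℂ] V i, (∀ i, h i ∈ H i) → ∀ x ∈ U, blockDiagEmbed V h x ∈ U

lemma embed_apply (h : ∀ i, V i ≃ₗᵢ[ℂ] V i) (x : PiLp 2 V) (j : Fin m) :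
    blockDiagEmbed V h x j = h j (x j) := rfl

lemma block_HInv (i : Fin m) : HInv H (block i) := by
  intro h _ x hx j hj
  rw [embed_apply, hx j hj, map_zero]

lemma mulSingle_mem (i : Fin m) {n : V i ≃ₗᵢ[ℂ] V i} (hn : n ∈ H i) (j : Fin m) :
    (Pi.mulSingle (M := fun j => V j ≃ₗᵢ[ℂ] V j) i n) j ∈ H j := by
  by_cases hj : j = i
  · subst hj; rw [Pi.mulSingle_eq_same]; exact hn
  · rw [Pi.mulSingle_eq_of_ne hj]; exact (H j).one_mem

/-- The key irreducibility lemma: an invariant "irreducible" nonzero submodule is a block. -/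
lemma eq_block_of_irreducible
    (hirr : ∀ i, ∀ W : Submodule ℂ (V i),
      (∀ h ∈ H i, ∀ v ∈ W, h v ∈ W) → W = ⊥ ∨ W = ⊤)
    (hnt : ∀ i, ∃ h ∈ H i, ∃ v : V i, h v ≠ v)
    (U : Submodule ℂ (PiLp 2 V)) (hU0 : U ≠ ⊥) (hinv : HInv H U)
    (hirrU : ∀ T : Submodule ℂ (PiLp 2 V), T ≤ U → HInv H T → T = ⊥ ∨ T = U) :
    ∃ j, U = block j := by
  -- the image of U under the projection to any coordinate is invariant
  have hproj : ∀ k : Fin m, ∀ h ∈ H k, ∀ v ∈ Submodule.map (projL k) U,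
      h v ∈ Submodule.map (projL k) U := by
    intro k h hh v hv
    obtain ⟨x, hx, rfl⟩ := hv
    refine ⟨blockDiagEmbed V (Pi.mulSingle k h) x, hinv _ (mulSingle_mem H k hh) x hx, ?_⟩
    rw [projL_apply, projL_apply, embed_apply, Pi.mulSingle_eq_same]
  -- the kernel piece: elements of U vanishing at coordinate k
  have hker_inv : ∀ k : Fin m, HInv H (U ⊓ LinearMap.ker (projL k)) := by
    intro k h hh x hx
    refine ⟨hinv h hh x hx.1, ?_⟩
    have : x k = 0 := hx.2
    show blockDiagEmbed V h x k = 0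
    rw [embed_apply, this, map_zero]
  -- if some element of U has nonzero k-coordinate, then proj is onto and injective on U
  have key : ∀ k : Fin m, (∃ x ∈ U, x k ≠ 0) →
      (Submodule.map (projL k) U = ⊤ ∧ ∀ x ∈ U, x k = 0 → x = 0) := by
    intro k ⟨x, hxU, hxk⟩
    have h1 : Submodule.map (projL k) U = ⊤ := by
      rcases hirr k _ (hproj k) with h | h
      · exfalso
        have hx' : x k ∈ Submodule.map (projL k) U := ⟨x, hxU, rfl⟩
        rw [h, Submodule.mem_bot] at hx'
        exact hxk hx'
      · exact h
    refine ⟨h1, ?_⟩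
    rcases hirrU _ inf_le_left (hker_inv k) with h | h
    · intro y hy hyk
      have : y ∈ U ⊓ LinearMap.ker (projL k) := ⟨hy, hyk⟩
      rw [h] at this
      exact this
    · exfalso
      have hx' : x ∈ U ⊓ LinearMap.ker (projL k) := by rw [h]; exact hxU
      exact hxk hx'.2
  -- find a coordinate where U is nonzero
  obtain ⟨x0, hx0U, hx00⟩ := (Submodule.ne_bot_iff U).mp hU0
  have : ∃ j, x0 j ≠ 0 := by
    by_contra hc
    push_neg at hc
    exact hx00 (PiLp.ext hc)
  obtain ⟨j, hj⟩ := this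
  obtain ⟨hjsurj, hjinj⟩ := key j ⟨x0, hx0U, hj⟩
  have hUle : U ≤ block j := by
    intro x hxU
    rw [mem_block]
    intro k hk
    by_contra hxk
    obtain ⟨hksurj, hkinj⟩ := key k ⟨x, hxU, hxk⟩
    obtain ⟨h, hh, v, hv⟩ := hnt j
    have : v ∈ Submodule.map (projL j) U := hjsurj ▸ Submodule.mem_top
    obtain ⟨z, hzU, hz⟩ := this
    rw [projL_apply] at hz
    set y := blockDiagEmbed V (Pi.mulSingle j h) z - z with hy
    have hyU : y ∈ U := sub_mem (hinv _ (mulSingle_mem H j hh) z hzU) hzU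
    have hyk : y k = 0 := by
      show (blockDiagEmbed V (Pi.mulSingle j h) z - z) k = 0
      rw [PiLp.sub_apply, embed_apply, Pi.mulSingle_eq_of_ne hk]
      show z k - z k = 0
      rw [sub_self]
    have hy0 : y = 0 := hkinj y hyU hyk
    have : y j = h v - v := by
      show (blockDiagEmbed V (Pi.mulSingle j h) z - z) j = _
      rw [PiLp.sub_apply, embed_apply, Pi.mulSingle_eq_same, hz]
    rw [hy0] at this
    exact hv (by rw [← sub_eq_zero]; exact this.symm)
  refine ⟨j, le_antisymm hUle ?_⟩
  intro y hy
  have : y j ∈ Submodule.map (projL j) U := hjsurj ▸ Submodule.mem_top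
  obtain ⟨x, hxU, hx⟩ := this
  rw [projL_apply] at hx
  have : x = y := block_ext (hUle hxU) hy hx
  exact this ▸ hxU

lemma nonzero_of_hnt (hnt : ∀ i, ∃ h ∈ H i, ∃ v : V i, h v ≠ v) (i : Fin m) :
    ∃ v : V i, v ≠ 0 := by
  obtain ⟨h, _, v, hv⟩ := hnt i
  refine ⟨v, fun hv0 => hv ?_⟩
  rw [hv0, map_zero]

lemma sing_ne_zero {i : Fin m} {v : V i} (hv : v ≠ 0) : sing i v ≠ 0 := by
  intro h
  apply hv
  have := congrArg (fun x : PiLp 2 V => x i) h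
  simpa [sing_apply_same] using this

lemma e_inj : Function.Injective (blockDiagEmbed V) := by
  intro u u' h
  funext i
  apply LinearIsometryEquiv.ext
  intro v
  have h2 : blockDiagEmbed V u (sing i v) = blockDiagEmbed V u' (sing i v) := by rw [h]
  have h3 := congrArg (fun x : PiLp 2 V => x i) h2
  simpa [embed_apply, sing_apply_same] using h3

lemma proj_invariant {S : Submodule ℂ (PiLp 2 V)} (hSinv : HInv H S) (k : Fin m) :
    ∀ h ∈ H k, ∀ v ∈ Submodule.map (projL k) S, h v ∈ Submodule.map (projL k) S := by
  intro h hh v hv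
  obtain ⟨x, hx, rfl⟩ := hv
  refine ⟨blockDiagEmbed V (Pi.mulSingle k h) x, hSinv _ (mulSingle_mem H k hh) x hx, ?_⟩
  rw [projL_apply, projL_apply, embed_apply, Pi.mulSingle_eq_same]

/-- An invariant submodule of a block is trivial or the whole block. -/
lemma sub_block_cases
    (hirr : ∀ i, ∀ W : Submodule ℂ (V i),
      (∀ h ∈ H i, ∀ v ∈ W, h v ∈ W) → W = ⊥ ∨ W = ⊤)
    {i : Fin m} {S : Submodule ℂ (PiLp 2 V)} (hS : S ≤ block i) (hSinv : HInv H S) :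
    S = ⊥ ∨ S = block i := by
  rcases hirr i _ (proj_invariant H hSinv i) with h | h
  · left
    rw [Submodule.eq_bot_iff]
    intro x hx
    have hxi : x i = 0 := by
      have : x i ∈ Submodule.map (projL i) S := ⟨x, hx, rfl⟩
      rw [h, Submodule.mem_bot] at this
      exact this
    refine PiLp.ext fun j => ?_
    by_cases hj : j = i
    · subst hj; exact hxi
    · exact hS hx j hj
  · right
    refine le_antisymm hS ?_
    intro y hy
    have : y i ∈ Submodule.map (projL i) S := by rw [h]; exact Submodule.mem_top
    obtain ⟨x, hxS, hx⟩ := this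
    rw [projL_apply] at hx
    have : x = y := block_ext (hS hxS) hy hx
    exact this ▸ hxS

/-- `Submodule.map` by a linear isometry equivalence. -/
noncomputable def mapS (g : PiLp 2 V ≃ₗᵢ[ℂ] PiLp 2 V) (S : Submodule ℂ (PiLp 2 V)) :
    Submodule ℂ (PiLp 2 V) :=
  Submodule.map (g.toLinearEquiv : PiLp 2 V →ₗ[ℂ] PiLp 2 V) S

lemma mem_mapS {g : PiLp 2 V ≃ₗᵢ[ℂ] PiLp 2 V} {S : Submodule ℂ (PiLp 2 V)} {x : PiLp 2 V} :
    x ∈ mapS g S ↔ ∃ y ∈ S, g y = x := Iff.rfl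

lemma mapS_one (S : Submodule ℂ (PiLp 2 V)) :
    mapS (1 : PiLp 2 V ≃ₗᵢ[ℂ] PiLp 2 V) S = S := by
  ext x
  rw [mem_mapS]
  constructor
  · rintro ⟨y, hy, rfl⟩; exact hy
  · intro hx; exact ⟨x, hx, rfl⟩

lemma mapS_mul (g g' : PiLp 2 V ≃ₗᵢ[ℂ] PiLp 2 V) (S : Submodule ℂ (PiLp 2 V)) :
    mapS (g * g') S = mapS g (mapS g' S) := by
  ext x
  simp only [mem_mapS]
  constructor
  · rintro ⟨y, hy, rfl⟩
    exact ⟨g' y, ⟨y, hy, rfl⟩, rfl⟩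
  · rintro ⟨y, ⟨z, hz, rfl⟩, rfl⟩
    exact ⟨z, hz, rfl⟩

lemma mapS_inv_mapS (g : PiLp 2 V ≃ₗᵢ[ℂ] PiLp 2 V) (S : Submodule ℂ (PiLp 2 V)) :
    mapS g (mapS g⁻¹ S) = S := by
  ext x
  simp only [mem_mapS]
  constructor
  · rintro ⟨y, ⟨z, hz, rfl⟩, rfl⟩
    simpa [LinearIsometryEquiv.coe_inv] using hz
  · intro hx
    refine ⟨g⁻¹ x, ⟨x, hx, rfl⟩, ?_⟩
    simp [LinearIsometryEquiv.coe_inv]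

lemma mapS_bot (g : PiLp 2 V ≃ₗᵢ[ℂ] PiLp 2 V) : mapS g (⊥ : Submodule ℂ (PiLp 2 V)) = ⊥ := by
  ext x
  simp only [mem_mapS, Submodule.mem_bot]
  constructor
  · rintro ⟨y, rfl, rfl⟩; exact map_zero g
  · rintro rfl; exact ⟨0, rfl, map_zero g⟩

lemma mapS_injective (g : PiLp 2 V ≃ₗᵢ[ℂ] PiLp 2 V) {S S' : Submodule ℂ (PiLp 2 V)}
    (h : mapS g S = mapS g S') : S = S' := by
  ext x
  constructor
  · intro hx
    have : g x ∈ mapS g S' := h ▸ (mem_mapS.mpr ⟨x, hx, rfl⟩)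
    obtain ⟨y, hy, hyx⟩ := mem_mapS.mp this
    rwa [← g.injective hyx]
  · intro hx
    have : g x ∈ mapS g S := h ▸ (mem_mapS.mpr ⟨x, hx, rfl⟩)
    obtain ⟨y, hy, hyx⟩ := mem_mapS.mp this
    rwa [← g.injective hyx]

/-- forward conjugation: if `g` normalizes the image of the product group then conjugation
by `g` sends block-diagonal elements of the product group to block-diagonal elements. -/
lemma conj_forward {g : PiLp 2 V ≃ₗᵢ[ℂ] PiLp 2 V}
    (hg : g ∈ Subgroup.normalizer ((Subgroup.map (blockDiagEmbed V) (Subgroup.pi Set.univ H) : Subgroup (PiLp 2 V ≃ₗᵢ[ℂ] PiLp 2 V)) : Set (PiLp 2 V ≃ₗᵢ[ℂ] PiLp 2 V)))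
    {h : ∀ i, V i ≃ₗᵢ[ℂ] V i} (hh : ∀ i, h i ∈ H i) :
    ∃ h' : ∀ i, V i ≃ₗᵢ[ℂ] V i, (∀ i, h' i ∈ H i) ∧
      ∀ x, g (blockDiagEmbed V h x) = blockDiagEmbed V h' (g x) := by
  rw [Subgroup.mem_normalizer_iff] at hg
  have hmem : blockDiagEmbed V h ∈ Subgroup.map (blockDiagEmbed V) (Subgroup.pi Set.univ H) :=
    ⟨h, (Subgroup.mem_pi Set.univ).mpr fun i _ => hh i, rfl⟩
  obtain ⟨h', hh', heq⟩ := (hg _).mp hmem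
  refine ⟨h', fun i => (Subgroup.mem_pi Set.univ).mp hh' i (Set.mem_univ i), fun x => ?_⟩
  have := congrArg (fun k : PiLp 2 V ≃ₗᵢ[ℂ] PiLp 2 V => k (g x)) heq
  simp only [LinearIsometryEquiv.coe_mul, Function.comp_apply, LinearIsometryEquiv.coe_inv] at this
  rw [g.symm_apply_apply] at this
  exact this.symm

/-- The image of a block under an element of the normalizer is a block. -/
lemma exists_block_map
    (hirr : ∀ i, ∀ W : Submodule ℂ (V i),
      (∀ h ∈ H i, ∀ v ∈ W, h v ∈ W) → W = ⊥ ∨ W = ⊤)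
    (hnt : ∀ i, ∃ h ∈ H i, ∃ v : V i, h v ≠ v)
    {g : PiLp 2 V ≃ₗᵢ[ℂ] PiLp 2 V}
    (hg : g ∈ Subgroup.normalizer ((Subgroup.map (blockDiagEmbed V) (Subgroup.pi Set.univ H) : Subgroup (PiLp 2 V ≃ₗᵢ[ℂ] PiLp 2 V)) : Set (PiLp 2 V ≃ₗᵢ[ℂ] PiLp 2 V)))
    (i : Fin m) : ∃ j, mapS g (block i) = block j := by
  apply eq_block_of_irreducible H hirr hnt
  · -- nonzero
    obtain ⟨v, hv⟩ := nonzero_of_hnt H hnt i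
    rw [Submodule.ne_bot_iff]
    refine ⟨g (sing i v), mem_mapS.mpr ⟨sing i v, sing_mem_block i v, rfl⟩, fun h0 => ?_⟩
    exact sing_ne_zero hv (g.map_eq_zero_iff.mp h0)
  · -- invariance
    intro h hh x hx
    obtain ⟨w, hw, rfl⟩ := mem_mapS.mp hx
    obtain ⟨h', hh', heq⟩ := conj_forward H ((Subgroup.normalizer ((Subgroup.map (blockDiagEmbed V) (Subgroup.pi Set.univ H) : Subgroup (PiLp 2 V ≃ₗᵢ[ℂ] PiLp 2 V)) : Set (PiLp 2 V ≃ₗᵢ[ℂ] PiLp 2 V))).inv_mem hg) hh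
    have h2 := heq (g w)
    simp only [LinearIsometryEquiv.coe_inv] at h2
    rw [g.symm_apply_apply] at h2
    have h3 : blockDiagEmbed V h (g w) = g (blockDiagEmbed V h' w) := by
      rw [← h2, g.apply_symm_apply]
    rw [h3]
    exact mem_mapS.mpr ⟨_, block_HInv H i h' hh' w hw, rfl⟩
  · -- irreducibility of the image
    intro T hT hTinv
    set S := mapS g⁻¹ T with hS
    have hSle : S ≤ block i := by
      intro x hx
      obtain ⟨t, ht, rfl⟩ := mem_mapS.mp hx
      obtain ⟨w, hw, rfl⟩ := mem_mapS.mp (hT ht)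
      simpa [LinearIsometryEquiv.coe_inv] using hw
    have hSinv : HInv H S := by
      intro h hh x hx
      obtain ⟨t, ht, rfl⟩ := mem_mapS.mp hx
      obtain ⟨h', hh', heq⟩ := conj_forward H hg hh
      have h2 := heq (g⁻¹ t)
      simp only [LinearIsometryEquiv.coe_inv] at h2
      rw [g.apply_symm_apply] at h2
      have h3 : blockDiagEmbed V h (g⁻¹ t) = g⁻¹ (blockDiagEmbed V h' t) := by
        simp only [LinearIsometryEquiv.coe_inv]
        apply g.injective
        rw [g.apply_symm_apply]
        exact h2
      rw [show blockDiagEmbed V h ((g⁻¹ : PiLp 2 V ≃ₗᵢ[ℂ] PiLp 2 V) t)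
          = g⁻¹ (blockDiagEmbed V h' t) from h3]
      exact mem_mapS.mpr ⟨_, hTinv h' hh' t ht, rfl⟩
    have hTS : T = mapS g S := (mapS_inv_mapS g T).symm
    rcases sub_block_cases H hirr hSle hSinv with h | h
    · left; rw [hTS, h, mapS_bot]
    · right; rw [hTS, h]

/-- The diagonal component of `g` at block `i`, as a linear map. -/
noncomputable def diagOf (g : PiLp 2 V ≃ₗᵢ[ℂ] PiLp 2 V) (i : Fin m) : V i →ₗ[ℂ] V i :=
  (projL i).comp ((g.toLinearEquiv : PiLp 2 V →ₗ[ℂ] PiLp 2 V).comp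
    ((WithLp.linearEquiv 2 ℂ (∀ j, V j)).symm.toLinearMap.comp (LinearMap.single ℂ V i)))

lemma diagOf_apply (g : PiLp 2 V ≃ₗᵢ[ℂ] PiLp 2 V) (i : Fin m) (v : V i) :
    diagOf g i v = g (sing i v) i := rfl

lemma sum_sing (x : PiLp 2 V) : ∑ k, sing k (x k) = x := by
  apply (WithLp.linearEquiv 2 ℂ (∀ j, V j)).injective
  rw [map_sum]
  funext j
  rw [Finset.sum_apply]
  exact Fintype.sum_pi_single j fun k => x k

lemma norm_conj {w : ∀ i, V i ≃ₗᵢ[ℂ] V i}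
    (hw : blockDiagEmbed V w ∈
      Subgroup.normalizer ((Subgroup.map (blockDiagEmbed V) (Subgroup.pi Set.univ H) : Subgroup (PiLp 2 V ≃ₗᵢ[ℂ] PiLp 2 V)) : Set (PiLp 2 V ≃ₗᵢ[ℂ] PiLp 2 V)))
    (i : Fin m) {n : V i ≃ₗᵢ[ℂ] V i} (hn : n ∈ H i) : w i * n * (w i)⁻¹ ∈ H i := by
  rw [Subgroup.mem_normalizer_iff] at hw
  have hmem : blockDiagEmbed V (Pi.mulSingle i n) ∈
      Subgroup.map (blockDiagEmbed V) (Subgroup.pi Set.univ H) :=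
    ⟨_, (Subgroup.mem_pi Set.univ).mpr fun j _ => mulSingle_mem H i hn j, rfl⟩
  obtain ⟨h', hh', heq⟩ := (hw _).mp hmem
  have h2 : blockDiagEmbed V h' = blockDiagEmbed V (w * Pi.mulSingle i n * w⁻¹) := by
    rw [heq, map_mul, map_mul, map_inv]
  have h3 := e_inj h2
  have hi := (Subgroup.mem_pi Set.univ).mp hh' i (Set.mem_univ i)
  rw [h3] at hi
  simpa [Pi.mul_apply, Pi.inv_apply, Pi.mulSingle_eq_same] using hi

lemma mem_map_normalizer_of_fixes {g : PiLp 2 V ≃ₗᵢ[ℂ] PiLp 2 V}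
    (hgB : g ∈ Subgroup.normalizer ((Subgroup.map (blockDiagEmbed V) (Subgroup.pi Set.univ H) : Subgroup (PiLp 2 V ≃ₗᵢ[ℂ] PiLp 2 V)) : Set (PiLp 2 V ≃ₗᵢ[ℂ] PiLp 2 V)))
    (hfix : ∀ i, mapS g (block i) = block i) :
    g ∈ Subgroup.map (blockDiagEmbed V) (Subgroup.pi Set.univ fun i => Subgroup.normalizer (H i : Set (V i ≃ₗᵢ[ℂ] V i))) := by
  classical
  have hgb : ∀ i (v : V i), g (sing i v) ∈ (block i : Submodule ℂ (PiLp 2 V)) := fun i v => by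
    rw [← hfix i]; exact mem_mapS.mpr ⟨_, sing_mem_block i v, rfl⟩
  have hnormp : ∀ i (v : V i), ‖diagOf g i v‖ = ‖v‖ := by
    intro i v
    rw [diagOf_apply, ← norm_of_mem_block (hgb i v), g.norm_map, norm_sing]
  have hsurj : ∀ i, Function.Surjective (diagOf g i) := by
    intro i v
    have : sing i v ∈ mapS g (block i) := by rw [hfix i]; exact sing_mem_block i v
    obtain ⟨x, hx, hgx⟩ := mem_mapS.mp this
    refine ⟨x i, ?_⟩
    rw [diagOf_apply, ← eq_sing_of_mem_block hx, hgx, sing_apply_same]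
  let u : ∀ i, V i ≃ₗᵢ[ℂ] V i := fun i =>
    LinearIsometryEquiv.ofSurjective ⟨diagOf g i, hnormp i⟩ (hsurj i)
  have hu_apply : ∀ i (v : V i), u i v = g (sing i v) i := fun i v => diagOf_apply g i v
  have heu : blockDiagEmbed V u = g := by
    apply LinearIsometryEquiv.ext
    intro x
    refine PiLp.ext fun j => ?_
    rw [embed_apply, hu_apply]
    have hx : g x = ∑ k, g (sing k (x k)) := by
      conv_lhs => rw [← sum_sing x]
      exact map_sum g (fun k => sing k (x k)) Finset.univ
    have h4 : (∑ k, g (sing k (x k))) j = ∑ k, (g (sing k (x k))) j := by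
      have h5 := map_sum (projL j) (fun k => g (sing k (x k))) Finset.univ
      simp only [projL_apply] at h5
      exact h5
    rw [show g x j = (g x) j from rfl, hx, h4]
    rw [Finset.sum_eq_single j (fun k _ hk => (hgb k (x k)) j (Ne.symm hk))
      (fun h => absurd (Finset.mem_univ j) h)]
  have hgB' := hgB
  rw [← heu] at hgB'
  have hgBinv : blockDiagEmbed V u⁻¹ ∈
      Subgroup.normalizer ((Subgroup.map (blockDiagEmbed V) (Subgroup.pi Set.univ H) : Subgroup (PiLp 2 V ≃ₗᵢ[ℂ] PiLp 2 V)) : Set (PiLp 2 V ≃ₗᵢ[ℂ] PiLp 2 V)) := by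
    rw [map_inv, heu]
    exact (Subgroup.normalizer ((Subgroup.map (blockDiagEmbed V) (Subgroup.pi Set.univ H) : Subgroup (PiLp 2 V ≃ₗᵢ[ℂ] PiLp 2 V)) : Set (PiLp 2 V ≃ₗᵢ[ℂ] PiLp 2 V))).inv_mem hgB
  refine ⟨u, (Subgroup.mem_pi Set.univ).mpr fun i _ => ?_, heu⟩
  rw [Subgroup.mem_normalizer_iff]
  intro n
  constructor
  · intro hn
    exact norm_conj H hgB' i hn
  · intro hn
    have := norm_conj H hgBinv i hn
    simpa [Pi.inv_apply, mul_assoc] using this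

end NormalizerAux

open NormalizerAux in
/-- Normalizer lemma: if each `Hᵢ°` acts irreducibly and non-trivially on `Vᵢ`, then the
product of the normalizers `N_{U(Vᵢ)}(Hᵢ°)` has finite index, at most `m!`, in the
normalizer of `H° = H₁° × ⋯ × H_m°` inside the unitary group of `V = V₁ ⊕ ⋯ ⊕ V_m`. -/
theorem normalizer_quotient_finite_of_totally_decomposed {m : ℕ} (V : Fin m → Type*)
    [∀ i, NormedAddCommGroup (V i)] [∀ i, InnerProductSpace ℂ (V i)]
    [∀ i, FiniteDimensional ℂ (V i)]
    (H : ∀ i, Subgroup (V i ≃ₗᵢ[ℂ] V i))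
    (hirr : ∀ i, ∀ W : Submodule ℂ (V i),
      (∀ h ∈ H i, ∀ v ∈ W, h v ∈ W) → W = ⊥ ∨ W = ⊤)
    (hnt : ∀ i, ∃ h ∈ H i, ∃ v : V i, h v ≠ v) :
    0 < Subgroup.relIndex
        (Subgroup.map (blockDiagEmbed V)
          (Subgroup.pi Set.univ fun i => Subgroup.normalizer (H i : Set (V i ≃ₗᵢ[ℂ] V i))))
        (Subgroup.normalizer
          ((Subgroup.map (blockDiagEmbed V) (Subgroup.pi Set.univ H) : Subgroup (PiLp 2 V ≃ₗᵢ[ℂ] PiLp 2 V)) :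
            Set (PiLp 2 V ≃ₗᵢ[ℂ] PiLp 2 V))) ∧
    Subgroup.relIndex
        (Subgroup.map (blockDiagEmbed V)
          (Subgroup.pi Set.univ fun i => Subgroup.normalizer (H i : Set (V i ≃ₗᵢ[ℂ] V i))))
        (Subgroup.normalizer
          ((Subgroup.map (blockDiagEmbed V) (Subgroup.pi Set.univ H) : Subgroup (PiLp 2 V ≃ₗᵢ[ℂ] PiLp 2 V)) :
            Set (PiLp 2 V ≃ₗᵢ[ℂ] PiLp 2 V))) ≤
      Nat.factorial m := by
  classical
  set B := Subgroup.normalizer ((Subgroup.map (blockDiagEmbed V) (Subgroup.pi Set.univ H) : Subgroup (PiLp 2 V ≃ₗᵢ[ℂ] PiLp 2 V)) : Set (PiLp 2 V ≃ₗᵢ[ℂ] PiLp 2 V)) with hB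
  set A := Subgroup.map (blockDiagEmbed V) (Subgroup.pi Set.univ fun i => Subgroup.normalizer (H i : Set (V i ≃ₗᵢ[ℂ] V i)))
    with hA
  have hchoice : ∀ g : ↥B, ∀ i, ∃ j, mapS (g : PiLp 2 V ≃ₗᵢ[ℂ] PiLp 2 V) (block i) = block j :=
    fun g i => exists_block_map H hirr hnt g.2 i
  choose σ hσ using hchoice
  have hnz : ∀ i, ∃ v : V i, v ≠ 0 := nonzero_of_hnt H hnt
  have huniq : ∀ (g : ↥B) (i j : Fin m),
      mapS (g : PiLp 2 V ≃ₗᵢ[ℂ] PiLp 2 V) (block i) = block j → σ g i = j := by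
    intro g i j h
    exact block_injective hnz ((hσ g i).symm.trans h)
  have hinj : ∀ g : ↥B, Function.Injective (σ g) := by
    intro g i i' h
    apply block_injective hnz
    apply mapS_injective (g : PiLp 2 V ≃ₗᵢ[ℂ] PiLp 2 V)
    rw [hσ g i, hσ g i', h]
  let φ : ↥B →* Equiv.Perm (Fin m) :=
    { toFun := fun g => Equiv.ofBijective (σ g) (Finite.injective_iff_bijective.mp (hinj g)),
      map_one' := by
        refine Equiv.ext fun i => ?_
        show σ 1 i = i
        apply huniq
        have : ((1 : ↥B) : PiLp 2 V ≃ₗᵢ[ℂ] PiLp 2 V) = 1 := rfl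
        rw [this]
        exact mapS_one (block i)
      map_mul' := fun g g' => by
        refine Equiv.ext fun i => ?_
        show σ (g * g') i = σ g (σ g' i)
        apply huniq
        have : ((g * g' : ↥B) : PiLp 2 V ≃ₗᵢ[ℂ] PiLp 2 V)
            = (g : PiLp 2 V ≃ₗᵢ[ℂ] PiLp 2 V) * (g' : PiLp 2 V ≃ₗᵢ[ℂ] PiLp 2 V) := rfl
        rw [this, mapS_mul, hσ g' i, hσ g (σ g' i)] }
  have hker : φ.ker ≤ A.subgroupOf B := by
    intro g hg
    rw [Subgroup.mem_subgroupOf]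
    apply mem_map_normalizer_of_fixes H g.2
    intro i
    rw [MonoidHom.mem_ker] at hg
    have h1 : φ g i = i := by rw [hg]; rfl
    have h2 : σ g i = i := h1
    rw [hσ g i, h2]
  have hdvd : (A.subgroupOf B).index ∣ φ.ker.index := Subgroup.index_dvd_of_le hker
  rw [Subgroup.index_ker] at hdvd
  have hcard : Nat.card φ.range ≤ Nat.factorial m :=
    calc Nat.card φ.range ≤ Nat.card (Equiv.Perm (Fin m)) :=
          Nat.card_le_card_of_injective
            (Subtype.val : φ.range → Equiv.Perm (Fin m)) Subtype.val_injective
      _ = Nat.factorial m := by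
          rw [Nat.card_eq_fintype_card, Fintype.card_perm, Fintype.card_fin]
  have hpos : 0 < Nat.card φ.range := Nat.card_pos
  have hrel : Subgroup.relIndex A B = (A.subgroupOf B).index := rfl
  constructor
  · rw [hrel]
    rcases Nat.eq_zero_or_pos (A.subgroupOf B).index with h0 | h
    · rw [h0] at hdvd
      exact absurd (zero_dvd_iff.mp hdvd) hpos.ne'
    · exact h
  · rw [hrel]
    exact (Nat.le_of_dvd hpos hdvd).trans hcard
end

section
/- Let V be a finite-dimensional complex Hermitian vector space and f a positive self-adjoint endomorphism of V (⟨f(v),v⟩ > 0 for all v ≠ 0). Then for any integers p, q ≥ 0 with p + q ≥ 1, the endomorphism f^{⊠p} ⊗ id_{(V*)^{⊗q}} of V^{⊗p} ⊗ (V*)^{⊗q} is semipositive and bounded above by p·(dim V)^{p−1}·tr(f) times the identity. -/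
open scoped TensorProduct InnerProductSpace ComplexOrder

lemma diag_inner_nonneg {ι W : Type*} [Fintype ι]
    [NormedAddCommGroup W] [InnerProductSpace ℂ W]
    (b : OrthonormalBasis ι ℂ W) (F : W →ₗ[ℂ] W) (μ : ι → ℝ)
    (hμ : ∀ j, 0 ≤ μ j) (hFb : ∀ j, F (b j) = (μ j : ℂ) • b j)
    (x : W) : 0 ≤ ⟪F x, x⟫_ℂ := by
  have hFx : F x = ∑ j, ((μ j : ℂ) * b.repr x j) • b j := by
    conv_lhs => rw [← b.sum_repr x]
    rw [map_sum]
    refine Finset.sum_congr rfl fun j _ => ?_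
    rw [map_smul, hFb j, smul_smul, mul_comm]
  have hexp : ⟪F x, x⟫_ℂ = ∑ j, (μ j : ℂ) *
      ((starRingEnd ℂ) (b.repr x j) * b.repr x j) := by
    rw [hFx, sum_inner]
    refine Finset.sum_congr rfl fun j _ => ?_
    rw [inner_smul_left, ← b.repr_apply_apply, map_mul, Complex.conj_ofReal]
    ring
  rw [hexp]
  refine Finset.sum_nonneg fun j _ => mul_nonneg ?_ ?_
  · exact Complex.zero_le_real.2 (hμ j)
  · rw [← Complex.normSq_eq_conj_mul_self]
    exact Complex.zero_le_real.2 (Complex.normSq_nonneg _)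

/-- The box-power `f^{⊠p} = Σᵢ id^{⊗(i−1)} ⊗ f ⊗ id^{⊗(p−i)}` on the `p`-th tensor power. -/
noncomputable def boxPow {K V : Type*} [CommSemiring K] [AddCommMonoid V] [Module K V]
    (p : ℕ) (f : V →ₗ[K] V) : (⨂[K]^p V) →ₗ[K] ⨂[K]^p V :=
  ∑ i : Fin p, PiTensorProduct.map (fun j => if j = i then f else LinearMap.id)

/-- If `f` is a positive self-adjoint endomorphism of a finite-dimensional Hermitian space
`V`, then for `p + q ≥ 1` the endomorphism `f^{⊠p} ⊗ id` of `V^{⊗p} ⊗ (V*)^{⊗q}` (the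
latter realized as a Hermitian space `W₂` of dimension `(dim V)^q` with the identity
operator, and the whole tensor product realized on a Hermitian space `W`) is semipositive
and bounded above by `p · (dim V)^{p−1} · tr f` times the identity. -/
theorem boxPow_tensor_id_semipositive_le
    {V W₁ W₂ W : Type*}
    [NormedAddCommGroup V] [InnerProductSpace ℂ V] [FiniteDimensional ℂ V]
    [NormedAddCommGroup W₁] [InnerProductSpace ℂ W₁] [FiniteDimensional ℂ W₁]
    [NormedAddCommGroup W₂] [InnerProductSpace ℂ W₂] [FiniteDimensional ℂ W₂]
    [NormedAddCommGroup W] [InnerProductSpace ℂ W]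
    (p q : ℕ) (hpq : 1 ≤ p + q)
    (f : V →ₗ[ℂ] V)
    (hself : ∀ v w : V, ⟪f v, w⟫_ℂ = ⟪v, f w⟫_ℂ)
    (hpos : ∀ v : V, v ≠ 0 → 0 < ⟪f v, v⟫_ℂ)
    (e₁ : (⨂[ℂ]^p V) ≃ₗ[ℂ] W₁)
    (he₁ : ∀ v w : Fin p → V,
      ⟪e₁ (PiTensorProduct.tprod ℂ v), e₁ (PiTensorProduct.tprod ℂ w)⟫_ℂ =
        ∏ i, ⟪v i, w i⟫_ℂ)
    (hW₂ : Module.finrank ℂ W₂ = (Module.finrank ℂ V) ^ q)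
    (e : (W₁ ⊗[ℂ] W₂) ≃ₗ[ℂ] W)
    (he : ∀ (x₁ y₁ : W₁) (x₂ y₂ : W₂),
      ⟪e (x₁ ⊗ₜ x₂), e (y₁ ⊗ₜ y₂)⟫_ℂ = ⟪x₁, y₁⟫_ℂ * ⟪x₂, y₂⟫_ℂ)
    (F : W →ₗ[ℂ] W)
    (hF : F = e.toLinearMap ∘ₗ
      (TensorProduct.map (e₁.toLinearMap ∘ₗ boxPow p f ∘ₗ e₁.symm.toLinearMap)
        LinearMap.id) ∘ₗ e.symm.toLinearMap) :
    (∀ x : W, 0 ≤ ⟪F x, x⟫_ℂ) ∧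
    (∀ x : W, 0 ≤
      ⟪((p : ℂ) * (Module.finrank ℂ V : ℂ) ^ (p - 1) * LinearMap.trace ℂ V f) • x - F x,
        x⟫_ℂ) := by
  classical
  set n := Module.finrank ℂ V with hn
  -- spectral data
  have hsym : f.IsSymmetric := fun v w => hself v w
  set bV := hsym.eigenvectorBasis rfl with hbV
  set lam := hsym.eigenvalues rfl with hlamdef
  have hfb : ∀ k, f (bV k) = (lam k : ℂ) • bV k := fun k =>
    hsym.apply_eigenvectorBasis rfl k
  have hlam : ∀ k, 0 < lam k := by
    intro k
    have hne : bV k ≠ 0 := bV.orthonormal.ne_zero k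
    have h1 : ⟪bV k, bV k⟫_ℂ = 1 := by
      have := bV.orthonormal.1 k
      rw [inner_self_eq_norm_sq_to_K, this]; norm_num
    have := hpos (bV k) hne
    rw [hfb k, inner_smul_left, Complex.conj_ofReal, h1, mul_one] at this
    exact Complex.zero_lt_real.1 this
  -- trace
  have htr : LinearMap.trace ℂ V f = ((∑ k, lam k : ℝ) : ℂ) := by
    rw [LinearMap.trace_eq_matrix_trace ℂ bV.toBasis f, Matrix.trace]
    push_cast
    refine Finset.sum_congr rfl fun k _ => ?_
    rw [Matrix.diag_apply, LinearMap.toMatrix_apply, OrthonormalBasis.coe_toBasis,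
      hfb k, map_smul]
    simp [Module.Basis.repr_self]
  -- orthonormal family
  haveI : FiniteDimensional ℂ W := Module.Finite.equiv e
  set m := Module.finrank ℂ W₂ with hm
  set bW₂ := stdOrthonormalBasis ℂ W₂ with hbW₂
  set w : (Fin p → Fin n) × Fin m → W :=
    fun Jk => e (e₁ (PiTensorProduct.tprod ℂ fun i => bV (Jk.1 i)) ⊗ₜ bW₂ Jk.2) with hw
  have hprod : ∀ J J' : Fin p → Fin n,
      (∏ i, ⟪bV (J i), bV (J' i)⟫_ℂ) = if J = J' then 1 else 0 := by
    intro J J'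
    by_cases h : J = J'
    · subst h
      simp [orthonormal_iff_ite.1 bV.orthonormal]
    · obtain ⟨i, hi⟩ := Function.ne_iff.1 h
      rw [if_neg h]
      refine Finset.prod_eq_zero (Finset.mem_univ i) ?_
      rw [orthonormal_iff_ite.1 bV.orthonormal, if_neg hi]
  have hon : Orthonormal ℂ w := by
    rw [orthonormal_iff_ite]
    intro a b
    rw [hw]
    simp only
    rw [he, he₁, hprod, orthonormal_iff_ite.1 bW₂.orthonormal]
    by_cases h1 : a.1 = b.1 <;> by_cases h2 : a.2 = b.2 <;>
      simp [h1, h2, Prod.ext_iff]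
  -- spanning
  have hsub : ∀ v : Fin p → V, (PiTensorProduct.tprod ℂ v) ∈
      Submodule.span ℂ (Set.range fun J : Fin p → Fin n =>
        PiTensorProduct.tprod ℂ fun i => bV (J i)) := by
    intro v
    have hv : v = fun i => ∑ k, bV.repr (v i) k • bV k :=
      funext fun i => (bV.sum_repr (v i)).symm
    have hexp : PiTensorProduct.tprod ℂ v =
        ∑ J : Fin p → Fin n, (∏ i, bV.repr (v i) (J i)) •
          PiTensorProduct.tprod ℂ fun i => bV (J i) := by
      conv_lhs => rw [hv]
      rw [MultilinearMap.map_sum]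
      exact Finset.sum_congr rfl fun J _ => MultilinearMap.map_smul_univ _ _ _
    rw [hexp]
    exact Submodule.sum_mem _ fun J _ =>
      Submodule.smul_mem _ _ (Submodule.subset_span ⟨J, rfl⟩)
  have hspan₁ : ∀ x₁ : W₁, x₁ ∈ Submodule.span ℂ (Set.range fun J : Fin p → Fin n =>
      e₁ (PiTensorProduct.tprod ℂ fun i => bV (J i))) := by
    intro x₁
    have h1 : x₁ = e₁ (e₁.symm x₁) := (e₁.apply_symm_apply x₁).symm
    rw [h1]
    have h2 := hsub  -- every tprod in span
    have h3 : (e₁.symm x₁) ∈ (⊤ : Submodule ℂ (⨂[ℂ]^p V)) := trivial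
    rw [← PiTensorProduct.span_tprod_eq_top] at h3
    refine Submodule.span_induction (p := fun y _ => e₁ y ∈ Submodule.span ℂ
        (Set.range fun J : Fin p → Fin n =>
          e₁ (PiTensorProduct.tprod ℂ fun i => bV (J i)))) ?_ ?_ ?_ ?_ h3
    · rintro y ⟨v, rfl⟩
      refine Submodule.span_induction (p := fun z _ => e₁ z ∈ Submodule.span ℂ
          (Set.range fun J : Fin p → Fin n =>
            e₁ (PiTensorProduct.tprod ℂ fun i => bV (J i)))) ?_ ?_ ?_ ?_ (hsub v)
      · rintro z ⟨J, rfl⟩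
        exact Submodule.subset_span ⟨J, rfl⟩
      · simp
      · intro a c _ _ ha hc
        rw [map_add]; exact Submodule.add_mem _ ha hc
      · intro a z _ hz
        rw [map_smul]; exact Submodule.smul_mem _ _ hz
    · simp
    · intro a c _ _ ha hc
      rw [map_add]; exact Submodule.add_mem _ ha hc
    · intro a z _ hz
      rw [map_smul]; exact Submodule.smul_mem _ _ hz
  have hspan : ⊤ ≤ Submodule.span ℂ (Set.range w) := by
    intro x _
    have hy : e (e.symm x) = x := e.apply_symm_apply x
    rw [← hy]
    generalize e.symm x = y
    induction y using TensorProduct.induction_on with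
    | zero => simp
    | add a c ha hc => rw [map_add]; exact Submodule.add_mem _ ha hc
    | tmul x₁ x₂ =>
      have hx₂ : x₂ ∈ Submodule.span ℂ (Set.range bW₂) := by
        have hsp := bW₂.toBasis.span_eq
        rw [OrthonormalBasis.coe_toBasis] at hsp
        rw [hsp]; trivial
      refine Submodule.span_induction (p := fun y₁ _ => e (y₁ ⊗ₜ x₂) ∈
          Submodule.span ℂ (Set.range w)) ?_ ?_ ?_ ?_ (hspan₁ x₁)
      · rintro y₁ ⟨J, rfl⟩
        refine Submodule.span_induction (p := fun y₂ _ => e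
            ((e₁ (PiTensorProduct.tprod ℂ fun i => bV (J i))) ⊗ₜ y₂) ∈
            Submodule.span ℂ (Set.range w)) ?_ ?_ ?_ ?_ hx₂
        · rintro y₂ ⟨k, rfl⟩
          exact Submodule.subset_span ⟨(J, k), rfl⟩
        · simp
        · intro a c _ _ ha hc
          simp only [TensorProduct.tmul_add, map_add]
          exact Submodule.add_mem _ ha hc
        · intro a z _ hz
          simp only [TensorProduct.tmul_smul, map_smul]
          exact Submodule.smul_mem _ _ hz
      · simp
      · intro a c _ _ ha hc
        simp only [TensorProduct.add_tmul, map_add]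
        exact Submodule.add_mem _ ha hc
      · intro a z _ hz
        simp only [← TensorProduct.smul_tmul', map_smul]
        exact Submodule.smul_mem _ _ hz
  set b : OrthonormalBasis ((Fin p → Fin n) × Fin m) ℂ W := OrthonormalBasis.mk hon hspan
    with hb
  have hbw : ∀ Jk, b Jk = w Jk := fun Jk => by
    rw [hb]; exact congrFun (OrthonormalBasis.coe_mk hon hspan) Jk
  -- eigenvalues
  set μ : (Fin p → Fin n) × Fin m → ℝ := fun Jk => ∑ i, lam (Jk.1 i) with hμ
  have hFw : ∀ Jk, F (w Jk) = (μ Jk : ℂ) • w Jk := by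
    rintro ⟨J, k⟩
    have hbox : boxPow p f (PiTensorProduct.tprod ℂ fun i => bV (J i)) =
        ((μ (J, k) : ℂ)) • PiTensorProduct.tprod ℂ fun i => bV (J i) := by
      rw [boxPow, LinearMap.sum_apply]
      have hterm : ∀ i : Fin p,
          PiTensorProduct.map (fun j => if j = i then f else LinearMap.id)
            (PiTensorProduct.tprod ℂ fun i' => bV (J i')) =
          (lam (J i) : ℂ) • PiTensorProduct.tprod ℂ fun i' => bV (J i') := by
        intro i
        rw [PiTensorProduct.map_tprod]
        have hfun : (fun j => (if j = i then f else LinearMap.id) ((fun i' => bV (J i')) j)) =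
            Function.update (fun j => bV (J j)) i ((lam (J i) : ℂ) • bV (J i)) := by
          funext j
          by_cases hj : j = i
          · subst hj; simp [Function.update, hfb]
          · simp [Function.update, hj]
        rw [hfun, MultilinearMap.map_update_smul, Function.update_eq_self]
      rw [Finset.sum_congr rfl fun i _ => hterm i, ← Finset.sum_smul]
      congr 1
      rw [hμ]
      push_cast
      rfl
    rw [hF]
    simp only [LinearMap.coe_comp, Function.comp_apply, LinearEquiv.coe_coe, hw]
    rw [LinearEquiv.symm_apply_apply, TensorProduct.map_tmul, LinearMap.id_apply]
    simp only [LinearMap.coe_comp, Function.comp_apply, LinearEquiv.coe_coe]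
    rw [LinearEquiv.symm_apply_apply, hbox, map_smul, ← TensorProduct.smul_tmul', map_smul]
  -- bounds
  have hμ0 : ∀ Jk, 0 ≤ μ Jk :=
    fun Jk => Finset.sum_nonneg fun i _ => (hlam _).le
  set T : ℝ := ∑ k, lam k with hT
  have hT0 : 0 ≤ T := Finset.sum_nonneg fun k _ => (hlam k).le
  set C : ℝ := p * n ^ (p - 1) * T with hC
  have hμC : ∀ Jk, μ Jk ≤ C := by
    intro Jk
    rcases Nat.eq_zero_or_pos p with hp | hp
    · subst hp; simp [hμ, hC]
    · have hn1 : 1 ≤ n := by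
        have : Nonempty (Fin n) := ⟨Jk.1 ⟨0, hp⟩⟩
        exact Fin.pos_iff_nonempty.2 this
      have h1 : μ Jk ≤ p * T := by
        calc μ Jk ≤ ∑ _i : Fin p, T :=
              Finset.sum_le_sum fun i _ =>
                Finset.single_le_sum (fun k _ => (hlam k).le) (Finset.mem_univ _)
          _ = p * T := by simp [mul_comm]
      refine h1.trans ?_
      rw [hC]
      have h2 : (1 : ℝ) ≤ (n : ℝ) ^ (p - 1) :=
        one_le_pow₀ (by exact_mod_cast hn1)
      calc (p : ℝ) * T = (p : ℝ) * 1 * T := by ring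
        _ ≤ (p : ℝ) * (n : ℝ) ^ (p - 1) * T :=
            mul_le_mul_of_nonneg_right
              (mul_le_mul_of_nonneg_left h2 (Nat.cast_nonneg p)) hT0
  constructor
  · intro x
    exact diag_inner_nonneg b F μ hμ0 (fun Jk => by rw [hbw, hFw]) x
  · intro x
    have hcast : ((p : ℂ) * (n : ℂ) ^ (p - 1) * LinearMap.trace ℂ V f) = ((C : ℝ) : ℂ) := by
      rw [htr, hC]; push_cast; ring
    rw [hcast]
    have := diag_inner_nonneg b ((C : ℂ) • LinearMap.id - F) (fun Jk => C - μ Jk)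
      (fun Jk => sub_nonneg.2 (hμC Jk))
      (fun Jk => by
        rw [LinearMap.sub_apply, LinearMap.smul_apply, LinearMap.id_apply, hbw, hFw]
        rw [Complex.ofReal_sub, sub_smul]) x
    simpa using this
end
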